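/- Let q be an odd prime power with q ≡ 3 (mod 4), and let F = F_q. Every element x of F such that both x and x+1 are nonzero squares can be written as x = ((α^t - α^{-t})/2)^2 for some integer t with 1 ≤ t ≤ (q-3)/4, where α is a fixed primitive root (generator of the multiplicative group) of F. -/

import Mathlib

theorem stmt_8 (q : ℕ) (F : Type*) [Field F] [Fintype F]
    (hq : Fintype.card F = q) (hodd : Odd q) (h4 : q % 4 = 3)
    (α : Fˣ) (hα : ∀ y : Fˣ, y ∈ Subgroup.zpowers α)
    (x : F) (hx0 : x ≠ 0) (hxs : IsSquare x)
    (hx10 : x + 1 ≠ 0) (hx1s : IsSquare (x + 1)) :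
    ∃ t : ℤ, 1 ≤ t ∧ t ≤ ((q - 3) / 4 : ℕ) ∧
      x = ((((α ^ t : Fˣ) : F) - ((α ^ (-t) : Fˣ) : F)) / 2) ^ 2 := by
  classical
  -- 2 ≠ 0 in F
  have h2 : (2 : F) ≠ 0 := by
    apply Ring.two_ne_zero
    intro h
    rw [FiniteField.even_card_iff_char_two, hq] at h
    obtain ⟨k, hk⟩ := hodd
    omega
  -- write q = 4*j + 3
  obtain ⟨j, hj⟩ : ∃ j, q = 4 * j + 3 := ⟨q / 4, by omega⟩
  have hk34 : ((q - 3) / 4 : ℕ) = j := by omega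
  -- order of α
  have hord : orderOf α = 4 * j + 2 := by
    rw [orderOf_eq_card_of_forall_mem_zpowers hα, Nat.card_eq_fintype_card,
      Fintype.card_units, hq, hj]
    omega
  -- α ^ (2j+1) = -1
  have hpow1 : α ^ (4 * j + 2) = 1 := by rw [← hord]; exact pow_orderOf_eq_one α
  have hne1 : α ^ (2 * j + 1) ≠ 1 := by
    intro h
    have := orderOf_dvd_of_pow_eq_one h
    rw [hord] at this
    have := Nat.le_of_dvd (by omega) this
    omega
  have hm : α ^ (2 * j + 1) = (-1 : Fˣ) := by
    have hsq : ((α : F) ^ (2 * j + 1)) ^ 2 = 1 := by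
      have : (α ^ (2 * j + 1)) ^ 2 = 1 := by
        rw [← pow_mul]
        have : (2 * j + 1) * 2 = 4 * j + 2 := by ring
        rw [this]; exact hpow1
      calc ((α : F) ^ (2 * j + 1)) ^ 2 = (((α ^ (2 * j + 1)) ^ 2 : Fˣ) : F) := by
            push_cast; ring
        _ = 1 := by rw [this]; rfl
    have hfac : ((α : F) ^ (2 * j + 1) - 1) * ((α : F) ^ (2 * j + 1) + 1) = 0 := by
      have : ((α : F) ^ (2 * j + 1) - 1) * ((α : F) ^ (2 * j + 1) + 1)
          = ((α : F) ^ (2 * j + 1)) ^ 2 - 1 := by ring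
      rw [this, hsq, sub_self]
    rcases mul_eq_zero.mp hfac with h | h
    · exfalso
      apply hne1
      ext
      push_cast
      linear_combination h
    · ext
      push_cast
      linear_combination h
  have hmz : α ^ ((2 * (j : ℤ) + 1)) = (-1 : Fˣ) := by
    have : ((2 * (j : ℤ) + 1)) = ((2 * j + 1 : ℕ) : ℤ) := by push_cast; ring
    rw [this, zpow_natCast, hm]
  set m : ℤ := 2 * (j : ℤ) + 1 with hmdef
  -- the function g
  set g : ℤ → F := fun t => ((((α ^ t : Fˣ) : F) - ((α ^ (-t) : Fˣ) : F)) / 2) ^ 2 with hg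
  -- shift invariance
  have hshift : ∀ t : ℤ, g (t + m) = g t := by
    intro t
    have h1 : (α ^ (t + m) : Fˣ) = -(α ^ t) := by
      rw [zpow_add, hmz, mul_neg_one]
    have h2' : (α ^ (-(t + m)) : Fˣ) = -(α ^ (-t)) := by
      have : -(t + m) = -t + -m := by ring
      rw [this, zpow_add, show (α ^ (-m) : Fˣ) = -1 from by
        rw [zpow_neg, hmz, inv_neg, inv_one], mul_neg_one]
    simp only [hg, h1, h2', Units.val_neg]
    ring
  -- negation invariance
  have hneg : ∀ t : ℤ, g (-t) = g t := by
    intro t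
    simp only [hg, neg_neg]
    ring
  -- periodicity
  have hper : ∀ (i : ℤ) (t : ℤ), g (t + m * i) = g t := by
    intro i
    induction i using Int.induction_on with
    | zero => intro t; simp
    | succ i ih =>
        intro t
        have : t + m * (i + 1) = (t + m * i) + m := by ring
        rw [this, hshift, ih]
    | pred i ih =>
        intro t
        have : t + m * (-i - 1) + m = t + m * (-i) := by ring
        rw [← hshift, this, ih]
  -- construct the unit u = y + z
  obtain ⟨y, hy⟩ := hxs
  obtain ⟨z, hz⟩ := hx1s
  have hmul : (y + z) * (z - y) = 1 := by
    have : (y + z) * (z - y) = z * z - y * y := by ring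
    rw [this, ← hz, ← hy]; ring
  set u : Fˣ := Units.mkOfMulEqOne (y + z) (z - y) hmul with hu
  have huv : (u : F) = y + z := rfl
  have huiv : ((u⁻¹ : Fˣ) : F) = z - y := rfl
  obtain ⟨s, hs⟩ := Subgroup.mem_zpowers_iff.mp (hα u)
  have hgs : g s = x := by
    have h1 : (α ^ s : Fˣ) = u := hs
    have h2' : (α ^ (-s) : Fˣ) = u⁻¹ := by rw [zpow_neg, h1]
    simp only [hg, h1, h2', huv, huiv]
    have harg : (y + z - (z - y)) / 2 = y := by
      field_simp
      ring
    rw [harg, hy]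
    ring
  -- reduce s mod m
  have hmpos : (0 : ℤ) < m := by positivity
  set s' : ℤ := s % m with hs'
  have hrange : 0 ≤ s' ∧ s' < m := ⟨Int.emod_nonneg s (by omega), Int.emod_lt_of_pos s hmpos⟩
  have hgs' : g s' = x := by
    rw [← hgs]
    conv_rhs => rw [← Int.emod_add_mul_ediv s m]
    rw [hper]
  have hs'ne : s' ≠ 0 := by
    intro h
    rw [h] at hgs'
    apply hx0
    rw [← hgs']
    simp [hg]
  rcases le_or_gt s' (j : ℤ) with hle | hgt
  · exact ⟨s', by omega, by rw [hk34]; omega, hgs'.symm⟩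
  · refine ⟨m - s', by omega, by rw [hk34]; omega, ?_⟩
    have : g (m - s') = g s' := by
      have h1 : m - s' = -s' + m := by ring
      rw [h1, hshift, hneg]
    rw [← hgs', ← this]
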